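/- Let n ≥ 1, let H : ℝⁿ × ℝⁿ → ℝ be continuous, and fix p ∈ ℝⁿ, λ ∈ ℝ, and σ > 0. Suppose v ∈ C²(ℝⁿ) is ℤⁿ-periodic and satisfies H(y, p + Dv(y)) = λ + Δv(y) for all y ∈ ℝⁿ, and suppose v^σ ∈ C²(ℝⁿ) is ℤⁿ-periodic and satisfies σ v^σ(y) + H(y, p + Dv^σ(y)) = Δv^σ(y) for all y ∈ ℝⁿ. Then sup_{y∈ℝⁿ} | σ v^σ(y) + λ | ≤ 2σ sup_{y∈ℝⁿ} |v(y)|. -/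

import Mathlib

noncomputable section

/-- The Laplacian of `f : ℝⁿ → ℝ` at `x`: the sum of the second directional derivatives
along the standard orthonormal basis vectors. -/
def lap {n : ℕ} (f : EuclideanSpace ℝ (Fin n) → ℝ) (x : EuclideanSpace ℝ (Fin n)) : ℝ :=
  ∑ i, iteratedFDeriv ℝ 2 f x ![EuclideanSpace.single i 1, EuclideanSpace.single i 1]

/-- `v : ℝⁿ → ℝ` is `ℤⁿ`-periodic. -/
def IsZnPeriodic {n : ℕ} (v : EuclideanSpace ℝ (Fin n) → ℝ) : Prop :=
  ∀ (y : EuclideanSpace ℝ (Fin n)) (k : Fin n → ℤ),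
    v (y + (show EuclideanSpace ℝ (Fin n) from WithLp.toLp 2 fun i => (k i : ℝ))) = v y

open Filter Topology

/-- Second derivative test: at a global max at 0, the second derivative is nonpositive. -/
lemma st13_sdtest (g : ℝ → ℝ) (hg : ContDiff ℝ 2 g) (h : ∀ t, g t ≤ g 0) :
    deriv (deriv g) 0 ≤ 0 := by
  by_contra hc
  push_neg at hc
  have hloc : IsLocalMax g 0 := Filter.Eventually.of_forall h
  have hd0 : deriv g 0 = 0 := hloc.deriv_eq_zero
  have hdg : ContDiff ℝ 1 (deriv g) := by
    have := (contDiff_succ_iff_deriv.mp (by norm_num at hg ⊢; exact hg : ContDiff ℝ (1+1) g)).2.2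
    exact this
  have hD : HasDerivAt (deriv g) (deriv (deriv g) 0) 0 :=
    ((hdg.differentiable (by norm_num)) 0).hasDerivAt
  have hslope := hasDerivAt_iff_tendsto_slope.mp hD
  have hpos : ∀ᶠ t in 𝓝[>] (0:ℝ), 0 < deriv g t := by
    have h1 : ∀ᶠ t in 𝓝[>] (0:ℝ), 0 < slope (deriv g) 0 t := by
      have := hslope.mono_left (nhdsWithin_mono 0 (by intro x hx; exact ne_of_gt hx))
      exact this.eventually (eventually_gt_nhds hc)
    filter_upwards [h1, self_mem_nhdsWithin] with t ht ht'
    have : slope (deriv g) 0 t = deriv g t / t := by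
      simp [slope_def_field, hd0]
    rw [this] at ht
    exact (div_pos_iff.mp ht).resolve_right (fun ⟨_, h2⟩ => absurd ht' (not_lt.mpr h2.le)) |>.1
  have hmem : {t | 0 < deriv g t} ∈ 𝓝[>] (0:ℝ) := hpos
  obtain ⟨u, hu, hsub⟩ := mem_nhdsGT_iff_exists_Ioo_subset.mp hmem
  have hu0 : 0 < u := hu
  have hmono : StrictMonoOn g (Set.Icc 0 u) := by
    apply strictMonoOn_of_deriv_pos (convex_Icc 0 u) hg.continuous.continuousOn
    intro x hx
    rw [interior_Icc] at hx
    exact hsub hx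
  have : g 0 < g (u/2) := hmono (Set.left_mem_Icc.mpr hu0.le)
    ⟨by linarith, by linarith⟩ (by linarith)
  exact absurd (h (u/2)) (not_le.mpr this)

/-- The second directional derivative as an iterated Fréchet derivative. -/
lemma st13_dirDeriv {E : Type*} [NormedAddCommGroup E] [NormedSpace ℝ E]
    (f : E → ℝ) (hf : ContDiff ℝ 2 f) (x u : E) :
    deriv (deriv (fun t : ℝ => f (x + t • u))) 0 = iteratedFDeriv ℝ 2 f x ![u, u] := by
  set L : ℝ → E := fun t => x + t • u with hL
  have hdf : Differentiable ℝ f := hf.differentiable (by norm_num)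
  have hLd : ∀ t : ℝ, HasDerivAt L u t := by
    intro t
    simpa [hL] using ((hasDerivAt_id t).smul_const u).const_add x
  have hg1 : ∀ t : ℝ, HasDerivAt (fun s => f (L s)) (fderiv ℝ f (L t) u) t := by
    intro t
    exact (hdf (L t)).hasFDerivAt.comp_hasDerivAt t (hLd t)
  have hderiv1 : deriv (fun s => f (L s)) = fun t => fderiv ℝ f (L t) u := by
    funext t; exact (hg1 t).deriv
  have hdf' : Differentiable ℝ (fderiv ℝ f) :=
    (hf.fderiv_right (m := 1) (by norm_num)).differentiable (by norm_num)
  have hL0 : L 0 = x := by simp [hL]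
  have h2 : HasDerivAt (fun t => fderiv ℝ f (L t)) (fderiv ℝ (fderiv ℝ f) x u) 0 := by
    have hx : HasFDerivAt (fderiv ℝ f) (fderiv ℝ (fderiv ℝ f) x) (L 0) :=
      hL0 ▸ (hdf' x).hasFDerivAt
    exact hx.comp_hasDerivAt 0 (hLd 0)
  have h3 : HasDerivAt (fun t => fderiv ℝ f (L t) u) (fderiv ℝ (fderiv ℝ f) x u u) 0 := by
    have := h2.clm_apply (hasDerivAt_const (0:ℝ) u)
    simpa using this
  rw [hderiv1, iteratedFDeriv_two_apply]
  simpa using h3.deriv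

/-- A continuous `ℤⁿ`-periodic function attains a global maximum. -/
lemma st13_exists_max {n : ℕ} (f : EuclideanSpace ℝ (Fin n) → ℝ) (hf : Continuous f)
    (hper : IsZnPeriodic f) : ∃ y0, ∀ y, f y ≤ f y0 := by
  set K : Set (EuclideanSpace ℝ (Fin n)) := Metric.closedBall 0 n with hK
  have hcomp : IsCompact K := isCompact_closedBall 0 n
  have hne : K.Nonempty := ⟨0, by simp [hK]⟩
  obtain ⟨y0, _, hy0⟩ := hcomp.exists_isMaxOn hne hf.continuousOn
  refine ⟨y0, fun y => ?_⟩
  set k : Fin n → ℤ := fun i => -⌊y i⌋ with hk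
  set z : EuclideanSpace ℝ (Fin n) :=
    y + (show EuclideanSpace ℝ (Fin n) from WithLp.toLp 2 fun i => (k i : ℝ)) with hz
  have hzy : f z = f y := hper y k
  have hzi : ∀ i, z i = Int.fract (y i) := by
    intro i
    have h0 : z i = y i + ((k i : ℤ) : ℝ) := rfl
    rw [h0, hk, Int.fract]
    push_cast
    ring
  have hzK : z ∈ K := by
    rw [hK, Metric.mem_closedBall, dist_zero_right]
    have h1 : ‖z‖ ≤ Real.sqrt n := by
      rw [EuclideanSpace.norm_eq]
      apply Real.sqrt_le_sqrt
      calc ∑ i, ‖z i‖ ^ 2 ≤ ∑ _i : Fin n, 1 := by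
            apply Finset.sum_le_sum
            intro i _
            rw [hzi i]
            have h2 : |Int.fract (y i)| ≤ 1 := by
              rw [abs_of_nonneg (Int.fract_nonneg _)]
              exact (Int.fract_lt_one _).le
            calc ‖Int.fract (y i)‖ ^ 2 = |Int.fract (y i)| ^2 := rfl
              _ ≤ 1 := by nlinarith [abs_nonneg (Int.fract (y i))]
        _ = n := by simp
    refine h1.trans ?_
    have hn2 : (n:ℝ) ≤ (n:ℝ)^2 := by exact_mod_cast Nat.le_self_pow (by norm_num) n
    calc Real.sqrt n ≤ Real.sqrt ((n:ℝ)^2) := Real.sqrt_le_sqrt hn2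
      _ = n := Real.sqrt_sq (by positivity)
  calc f y = f z := hzy.symm
    _ ≤ f y0 := hy0 hzK

/-- At a global max point of `a - b` the gradients agree and the Laplacians compare. -/
lemma st13_maxpoint {n : ℕ} (a b : EuclideanSpace ℝ (Fin n) → ℝ)
    (ha : ContDiff ℝ 2 a) (hb : ContDiff ℝ 2 b) (y0 : EuclideanSpace ℝ (Fin n))
    (hmax : ∀ y, a y - b y ≤ a y0 - b y0) :
    gradient a y0 = gradient b y0 ∧ lap a y0 ≤ lap b y0 := by
  set w : EuclideanSpace ℝ (Fin n) → ℝ := fun y => a y - b y with hwdef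
  have hw : ContDiff ℝ 2 w := ha.sub hb
  have hda : DifferentiableAt ℝ a y0 := (ha.differentiable (by norm_num)) y0
  have hdb : DifferentiableAt ℝ b y0 := (hb.differentiable (by norm_num)) y0
  have hloc : IsLocalMax w y0 := Filter.Eventually.of_forall hmax
  have hf0 : fderiv ℝ w y0 = 0 := hloc.fderiv_eq_zero
  have hfd : fderiv ℝ a y0 = fderiv ℝ b y0 := by
    have : fderiv ℝ w y0 = fderiv ℝ a y0 - fderiv ℝ b y0 := fderiv_sub hda hdb
    rw [this] at hf0
    exact sub_eq_zero.mp hf0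
  constructor
  · show (InnerProductSpace.toDual ℝ _).symm (fderiv ℝ a y0)
      = (InnerProductSpace.toDual ℝ _).symm (fderiv ℝ b y0)
    rw [hfd]
  · apply Finset.sum_le_sum
    intro i _
    set u : EuclideanSpace ℝ (Fin n) := EuclideanSpace.single i 1 with hu
    have ha2 : ContDiff ℝ ((2:ℕ) : ℕ∞) a := by exact_mod_cast ha
    have hb2 : ContDiff ℝ ((2:ℕ) : ℕ∞) b := by exact_mod_cast hb
    have hsplit : iteratedFDeriv ℝ 2 w y0 ![u, u]
        = iteratedFDeriv ℝ 2 a y0 ![u, u] - iteratedFDeriv ℝ 2 b y0 ![u, u] := by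
      have hfun : w = (fun y => a y + -(b y)) := by
        funext y; simp [hwdef, sub_eq_add_neg]
      have h1 : iteratedFDeriv ℝ 2 (fun y : EuclideanSpace ℝ (Fin n) => a y + -(b y)) y0
          = iteratedFDeriv ℝ 2 a y0
            + iteratedFDeriv ℝ 2 (fun y : EuclideanSpace ℝ (Fin n) => -(b y)) y0 :=
        iteratedFDeriv_add_apply' ha2.contDiffAt hb2.neg.contDiffAt
      have h2 : iteratedFDeriv ℝ 2 (fun y : EuclideanSpace ℝ (Fin n) => -(b y)) y0
          = -iteratedFDeriv ℝ 2 b y0 :=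
        iteratedFDeriv_neg_apply (i := 2) (f := b)
      rw [hfun, h1, h2]
      simp [sub_eq_add_neg]
    have hkey : iteratedFDeriv ℝ 2 w y0 ![u, u] ≤ 0 := by
      rw [← st13_dirDeriv w hw y0 u]
      apply st13_sdtest _ (hw.comp (contDiff_const.add (contDiff_id.smul contDiff_const)))
      intro t
      show w (y0 + t • u) ≤ w (y0 + (0:ℝ) • u)
      rw [zero_smul, add_zero]
      exact hmax (y0 + t • u)
    linarith [hsplit ▸ hkey]

/-- Let `H : ℝⁿ × ℝⁿ → ℝ` be continuous, `p ∈ ℝⁿ`, `λ ∈ ℝ`, `σ > 0`.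
If `v ∈ C²` is `ℤⁿ`-periodic with `H(y, p + Dv) = λ + Δv`, and `v^σ ∈ C²` is
`ℤⁿ`-periodic with `σ v^σ + H(y, p + Dv^σ) = Δv^σ`, then
`sup_y |σ v^σ(y) + λ| ≤ 2σ sup_y |v(y)|`. -/
theorem statement13
    (n : ℕ) (hn : 0 < n)
    (H : EuclideanSpace ℝ (Fin n) → EuclideanSpace ℝ (Fin n) → ℝ)
    (hH : Continuous (fun q : EuclideanSpace ℝ (Fin n) × EuclideanSpace ℝ (Fin n) =>
      H q.1 q.2))
    (p : EuclideanSpace ℝ (Fin n)) (lam σ : ℝ) (hσ : 0 < σ)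
    (v : EuclideanSpace ℝ (Fin n) → ℝ) (hv : ContDiff ℝ 2 v) (hv_per : IsZnPeriodic v)
    (hv_eq : ∀ y : EuclideanSpace ℝ (Fin n), H y (p + gradient v y) = lam + lap v y)
    (vσ : EuclideanSpace ℝ (Fin n) → ℝ) (hvσ : ContDiff ℝ 2 vσ)
    (hvσ_per : IsZnPeriodic vσ)
    (hvσ_eq : ∀ y : EuclideanSpace ℝ (Fin n),
      σ * vσ y + H y (p + gradient vσ y) = lap vσ y) :
    (⨆ y : EuclideanSpace ℝ (Fin n), |σ * vσ y + lam|)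
      ≤ 2 * σ * ⨆ y : EuclideanSpace ℝ (Fin n), |v y| := by
  -- bound on |v|
  obtain ⟨ym, hym⟩ := st13_exists_max (fun y => |v y|) hv.continuous.abs
    (fun y k => by simp only []; rw [hv_per y k])
  have hBdd : BddAbove (Set.range fun y => |v y|) := ⟨|v ym|, by rintro _ ⟨y, rfl⟩; exact hym y⟩
  set S : ℝ := ⨆ y : EuclideanSpace ℝ (Fin n), |v y| with hS
  have hvS : ∀ y, |v y| ≤ S := fun y => le_ciSup hBdd y
  -- max point of vσ - v
  obtain ⟨yM, hyM⟩ := st13_exists_max (fun y => vσ y - v y)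
    (hvσ.continuous.sub hv.continuous)
    (fun y k => by simp only []; rw [hv_per y k, hvσ_per y k])
  -- max point of v - vσ
  obtain ⟨ym2, hym2⟩ := st13_exists_max (fun y => v y - vσ y)
    (hv.continuous.sub hvσ.continuous)
    (fun y k => by simp only []; rw [hv_per y k, hvσ_per y k])
  obtain ⟨hgradM, hlapM⟩ := st13_maxpoint vσ v hvσ hv yM hyM
  obtain ⟨hgradm, hlapm⟩ := st13_maxpoint v vσ hv hvσ ym2 hym2
  -- at the max point: σ vσ yM + lam ≤ 0
  have hMkey : σ * vσ yM + lam ≤ 0 := by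
    have h1 := hvσ_eq yM
    rw [hgradM, hv_eq yM] at h1
    linarith
  -- at the min point: σ vσ ym2 + lam ≥ 0
  have hmkey : 0 ≤ σ * vσ ym2 + lam := by
    have h1 := hvσ_eq ym2
    rw [← hgradm, hv_eq ym2] at h1
    linarith
  apply ciSup_le
  intro y
  rw [abs_le]
  constructor
  · -- lower bound via ym2
    have h2 := mul_le_mul_of_nonneg_left (hym2 y) hσ.le
    have h5 := mul_le_mul_of_nonneg_left (abs_le.mp (hvS y)).1 hσ.le
    have h6 := mul_le_mul_of_nonneg_left (abs_le.mp (hvS ym2)).2 hσ.le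
    nlinarith [hmkey]
  · have h2 := mul_le_mul_of_nonneg_left (hyM y) hσ.le
    have h5 := mul_le_mul_of_nonneg_left (abs_le.mp (hvS y)).2 hσ.le
    have h6 := mul_le_mul_of_nonneg_left (abs_le.mp (hvS yM)).1 hσ.le
    nlinarith [hMkey]
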